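/- Let p = (i, ℓ) be a path of grade g. Then: (1a) there exists a factorisable path y of grade g + 1 of which p is a proper subpath; (1b) if the source i of p is not a factorisable vertex, then this y is unique; (2a) if g > 0, there exists a factorisable path z of grade g − 1 that is a proper subpath of p; (2b) if the target i − ℓ of p is not a factorisable vertex, then this z is unique. -/
import Mathlib


/-- Paths of the quiver `ℤ` (arrows `i → i - 1`) are pairs `(source, length)`;
`p` is a subpath of `q` iff the source of `p` is at most that of `q` and the
target of `q` is at most that of `p`. -/
def ZIsSubpath (p q : ℤ × ℕ) : Prop :=
  p.1 ≤ q.1 ∧ q.1 - (q.2 : ℤ) ≤ p.1 - (p.2 : ℤ)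

/-- Proper subpath: a subpath that is not the whole path. -/
def ZIsProperSubpath (p q : ℤ × ℕ) : Prop :=
  ZIsSubpath p q ∧ p ≠ q

/-- A path is factorisable (w.r.t. the factorisable vertices, i.e. the values
of `x`) if both its source and its target are factorisable vertices. -/
def IsFactorisable (x : ℤ → ℤ) (p : ℤ × ℕ) : Prop :=
  (∃ s : ℤ, x s = p.1) ∧ ∃ s : ℤ, x s = p.1 - (p.2 : ℤ)

/-- The grade of the path `(i, ℓ)` is `m i - m (i - ℓ)`, where
`m t = max {s : x s ≤ t}`. -/
def pathGrade (m : ℤ → ℤ) (p : ℤ × ℕ) : ℤ :=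
  m p.1 - m (p.1 - (p.2 : ℤ))

/-- **Comparison with factorisable paths.** Any path `p` of grade `g` is a
proper subpath of a factorisable path of grade `g + 1` (unique if the source
of `p` is not factorisable), and if `g > 0` it has a proper factorisable
subpath of grade `g - 1` (unique if the target of `p` is not factorisable). -/
theorem grade_comparison (x m : ℤ → ℤ) (hx : StrictMono x)
    (hm : ∀ t : ℤ, x (m t) ≤ t ∧ ∀ s : ℤ, x s ≤ t → s ≤ m t)
    (i : ℤ) (ℓ : ℕ) (g : ℤ) (hg : pathGrade m (i, ℓ) = g) :
    (∃ y : ℤ × ℕ, IsFactorisable x y ∧ pathGrade m y = g + 1 ∧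
        ZIsProperSubpath (i, ℓ) y) ∧
    ((¬ ∃ s : ℤ, x s = i) →
      ∀ y y' : ℤ × ℕ,
        (IsFactorisable x y ∧ pathGrade m y = g + 1 ∧ ZIsProperSubpath (i, ℓ) y) →
        (IsFactorisable x y' ∧ pathGrade m y' = g + 1 ∧ ZIsProperSubpath (i, ℓ) y') →
        y = y') ∧
    (0 < g →
      ∃ z : ℤ × ℕ, IsFactorisable x z ∧ pathGrade m z = g - 1 ∧
        ZIsProperSubpath z (i, ℓ)) ∧
    ((¬ ∃ s : ℤ, x s = i - (ℓ : ℤ)) →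
      ∀ z z' : ℤ × ℕ,
        (IsFactorisable x z ∧ pathGrade m z = g - 1 ∧ ZIsProperSubpath z (i, ℓ)) →
        (IsFactorisable x z' ∧ pathGrade m z' = g - 1 ∧ ZIsProperSubpath z' (i, ℓ)) →
        z = z') := by

  have hmx : ∀ s : ℤ, m (x s) = s := fun s =>
    le_antisymm (hx.le_iff_le.mp (hm (x s)).1) ((hm (x s)).2 s le_rfl)
  set a := m i with ha
  set b := m (i - (ℓ : ℤ)) with hb
  have hbi : x b ≤ i - (ℓ : ℤ) := (hm (i - (ℓ : ℤ))).1
  have hxa : x a ≤ i := (hm i).1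
  have hab : b ≤ a := (hm i).2 b (by omega)
  have hgab : g = a - b := by simpa [pathGrade] using hg.symm
  have hia : i < x (a + 1) := by
    by_contra h
    push_neg at h
    have := (hm i).2 (a + 1) h
    omega
  -- canonical y
  have hLy : ((x (a + 1) - x b).toNat : ℤ) = x (a + 1) - x b :=
    Int.toNat_of_nonneg (by omega)
  have hykey : ∀ y : ℤ × ℕ, IsFactorisable x y → pathGrade m y = g + 1 →
      ZIsSubpath (i, ℓ) y → i < y.1 →
      y = (x (a + 1), (x (a + 1) - x b).toNat) := by
    rintro ⟨j, n⟩ ⟨⟨s, hs⟩, ⟨s', hs'⟩⟩ hgr ⟨h1, h2⟩ h3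
    simp only [pathGrade] at hgr
    simp only at hs hs' h1 h2 h3
    rw [← hs', ← hs, hmx, hmx] at hgr
    have has : a < s := by
      have : x a < x s := by omega
      exact hx.lt_iff_lt.mp this
    have hs'b : s' ≤ b := (hm (i - (ℓ : ℤ))).2 s' (by omega)
    have hss : s = a + 1 := by
      have := hx.monotone (show s' ≤ b from hs'b)
      omega
    have hs'' : s' = b := by
      have h1' := hx.monotone (show a + 1 ≤ s by omega)
      omega
    subst hss hs''
    have hn : (n : ℤ) = ((x (a + 1) - x b).toNat : ℤ) := by omega
    have : n = (x (a + 1) - x b).toNat := Int.ofNat.inj hn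
    simp [← hs, this]
  refine ⟨?_, ?_, ?_, ?_⟩
  · refine ⟨(x (a + 1), (x (a + 1) - x b).toNat), ⟨⟨a + 1, rfl⟩, ⟨b, by simp; omega⟩⟩, ?_,
      ⟨⟨by simp; omega, by simp; omega⟩, ?_⟩⟩
    · simp only [pathGrade]
      have : x (a + 1) - ((x (a + 1) - x b).toNat : ℤ) = x b := by omega
      rw [this, hmx, hmx]
      omega
    · intro h
      have : i = x (a + 1) := congrArg Prod.fst h
      omega
  · rintro hnf y y' ⟨hf, hgr, hsub, hne⟩ ⟨hf', hgr', hsub', hne'⟩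
    have hy1 : i < y.1 := by
      rcases lt_or_eq_of_le hsub.1 with h | h
      · exact h
      · exfalso; rcases hf.1 with ⟨s, hs⟩; exact hnf ⟨s, by omega⟩
    have hy1' : i < y'.1 := by
      rcases lt_or_eq_of_le hsub'.1 with h | h
      · exact h
      · exfalso; rcases hf'.1 with ⟨s, hs⟩; exact hnf ⟨s, by omega⟩
    rw [hykey y hf hgr hsub hy1, hykey y' hf' hgr' hsub' hy1']
  · intro hgpos
    have hba : b + 1 ≤ a := by omega
    have hib : i - (ℓ : ℤ) < x (b + 1) := by
      by_contra h
      push_neg at h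
      exact absurd ((hm (i - (ℓ : ℤ))).2 (b + 1) h) (by omega)
    have hxx : x (b + 1) ≤ x a := hx.monotone hba
    have hLz : ((x a - x (b + 1)).toNat : ℤ) = x a - x (b + 1) :=
      Int.toNat_of_nonneg (by omega)
    refine ⟨(x a, (x a - x (b + 1)).toNat), ⟨⟨a, rfl⟩, ⟨b + 1, by simp; omega⟩⟩, ?_,
      ⟨⟨by simp; omega, by simp; omega⟩, ?_⟩⟩
    · simp only [pathGrade]
      have : x a - ((x a - x (b + 1)).toNat : ℤ) = x (b + 1) := by omega
      rw [this, hmx, hmx]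
      omega
    · intro h
      have h1 : x a = i := congrArg Prod.fst h
      have h2 : (x a - x (b + 1)).toNat = ℓ := congrArg Prod.snd h
      omega
  · rintro hnf z z' hz hz'
    have hzkey : ∀ w : ℤ × ℕ, (IsFactorisable x w ∧ pathGrade m w = g - 1 ∧
        ZIsProperSubpath w (i, ℓ)) →
        (w.1 = x a ∧ (w.1 : ℤ) - (w.2 : ℤ) = x (b + 1)) := by
      rintro ⟨j, n⟩ ⟨⟨⟨s, hs⟩, ⟨s', hs'⟩⟩, hgr, ⟨⟨h1, h2⟩, hne⟩⟩
      simp only [pathGrade] at hgr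
      simp only at hs hs' h1 h2 ⊢
      rw [← hs', ← hs, hmx, hmx] at hgr
      have hsa : s ≤ a := (hm i).2 s (by omega)
      have hbs' : b < s' := by
        have hxne : x s' ≠ i - (ℓ : ℤ) := fun h => hnf ⟨s', h⟩
        have : i - (ℓ : ℤ) < x s' := by omega
        by_contra h
        push_neg at h
        have := hx.monotone h
        omega
      have hseq : s = a := by
        have := hx.monotone (show b + 1 ≤ s' by omega)
        omega
      have hs'eq : s' = b + 1 := by
        have := hx.monotone (show s ≤ a from hsa)
        omega
      subst hseq hs'eq
      exact ⟨hs.symm, by omega⟩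
    obtain ⟨e1, e2⟩ := hzkey z hz
    obtain ⟨e1', e2'⟩ := hzkey z' hz'
    have : (z.2 : ℤ) = (z'.2 : ℤ) := by omega
    have h2 : z.2 = z'.2 := Int.ofNat.inj this
    exact Prod.ext (by omega) h2
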